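/- If there exists a Lusin set of cardinality 𝔠 in P, the space of irrational numbers of [0,1], then C_8(𝔠, ℵ₁) holds: there exist a set E ⊆ ℝ of cardinality 𝔠 and a continuous function f : E → ℝ which is not uniformly continuous on any uncountable subset of E. -/

import Mathlib

open Cardinal

noncomputable def qSeq (n : ℕ) : ℝ := (((Denumerable.eqv ℚ).symm n : ℚ) : ℝ)

lemma qSeq_surj (q : ℚ) : ∃ n, qSeq n = (q : ℝ) :=
  ⟨Denumerable.eqv ℚ q, by simp [qSeq]⟩

lemma qSeq_eq (n : ℕ) : qSeq n = (((Denumerable.eqv ℚ).symm n : ℚ) : ℝ) := rfl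

attribute [irreducible] qSeq

noncomputable def FF (x : ℝ) : ℝ := ∑' n : ℕ, if qSeq n ≤ x then (2⁻¹ : ℝ) ^ n else 0

lemma FF_summable (x : ℝ) :
    Summable (fun n : ℕ => if qSeq n ≤ x then (2⁻¹ : ℝ) ^ n else 0) := by
  have h1 : ∀ n : ℕ, 0 ≤ if qSeq n ≤ x then (2⁻¹ : ℝ) ^ n else 0 := by
    intro n; split <;> positivity
  have h2 : ∀ n : ℕ, (if qSeq n ≤ x then (2⁻¹ : ℝ) ^ n else 0) ≤ (2⁻¹ : ℝ) ^ n := by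
    intro n; split
    · exact le_refl _
    · positivity
  exact Summable.of_nonneg_of_le h1 h2
    (summable_geometric_of_lt_one (by norm_num) (by norm_num))

lemma FF_jump {x y : ℝ} (n : ℕ) (hx : x < qSeq n) (hy : qSeq n ≤ y) :
    FF x + (2⁻¹ : ℝ) ^ n ≤ FF y := by
  have hxy : x ≤ y := le_trans hx.le hy
  have h1 : ∀ m : ℕ,
      (if qSeq m ≤ x then (2⁻¹ : ℝ) ^ m else 0) + (if m = n then (2⁻¹ : ℝ) ^ n else 0)
        ≤ (if qSeq m ≤ y then (2⁻¹ : ℝ) ^ m else 0) := by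
    intro m
    by_cases hm : m = n
    · subst hm
      rw [if_neg (not_le.mpr hx), if_pos rfl, if_pos hy, zero_add]
    · rw [if_neg hm, add_zero]
      by_cases h : qSeq m ≤ x
      · rw [if_pos h, if_pos (h.trans hxy)]
      · rw [if_neg h]; split <;> positivity
  have hs1 := FF_summable x
  have hs2 : Summable (fun m : ℕ => if m = n then (2⁻¹ : ℝ) ^ n else 0) :=
    summable_of_ne_finset_zero (s := {n}) (by intro m hm; simp at hm; simp [hm])
  calc FF x + (2⁻¹ : ℝ) ^ n
      = ∑' m : ℕ, ((if qSeq m ≤ x then (2⁻¹ : ℝ) ^ m else 0)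
          + (if m = n then (2⁻¹ : ℝ) ^ n else 0)) := by
        rw [Summable.tsum_add hs1 hs2, tsum_ite_eq]; rfl
    _ ≤ FF y := Summable.tsum_le_tsum h1 (hs1.add hs2) (FF_summable y)

lemma FF_contAt {x : ℝ} (hx : Irrational x) : ContinuousAt FF x := by
  rw [Metric.continuousAt_iff]
  intro ε hε
  obtain ⟨N, hN⟩ := exists_pow_lt_of_lt_one (x := ε / 2) (y := (2⁻¹ : ℝ)) (by linarith) (by norm_num)
  have hδex : ∀ M : ℕ, ∃ δ > 0, ∀ n < M, δ ≤ |x - qSeq n| := by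
    intro M
    induction M with
    | zero => exact ⟨1, one_pos, by omega⟩
    | succ k ih =>
      obtain ⟨δ, hδ0, hδ⟩ := ih
      have hne : x - qSeq k ≠ 0 := by
        refine sub_ne_zero.mpr fun h => ?_
        exact hx ⟨(Denumerable.eqv ℚ).symm k, by rw [← qSeq_eq]; exact h.symm⟩
      refine ⟨min δ |x - qSeq k|, lt_min hδ0 (abs_pos.mpr hne), fun n hn => ?_⟩
      rcases Nat.lt_succ_iff_lt_or_eq.mp hn with h | h
      · exact le_trans (min_le_left _ _) (hδ n h)
      · subst h; exact min_le_right _ _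
  obtain ⟨δ, hδ0, hδ⟩ := hδex N
  refine ⟨δ, hδ0, fun {y} hy => ?_⟩
  rw [Real.dist_eq] at hy
  -- for n < N the indicator values agree
  have hagree : ∀ n < N, (if qSeq n ≤ y then (2⁻¹ : ℝ) ^ n else 0)
      = (if qSeq n ≤ x then (2⁻¹ : ℝ) ^ n else 0) := by
    intro n hn
    have h1 := hδ n hn
    rcases abs_cases (x - qSeq n) with ⟨h2, _⟩ | ⟨h2, _⟩ <;>
      rcases abs_cases (y - x) with ⟨h3, _⟩ | ⟨h3, _⟩ <;>
    · congr 1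
      apply propext
      constructor <;> intro <;> linarith [hy, h1, h2, h3]
  have hsub : Summable (fun n : ℕ =>
      (if qSeq n ≤ y then (2⁻¹ : ℝ) ^ n else 0) - (if qSeq n ≤ x then (2⁻¹ : ℝ) ^ n else 0)) :=
    (FF_summable y).sub (FF_summable x)
  have hnormsum : Summable (fun n : ℕ =>
      ‖(if qSeq n ≤ y then (2⁻¹ : ℝ) ^ n else 0) - (if qSeq n ≤ x then (2⁻¹ : ℝ) ^ n else 0)‖) := by
    have h1 : ∀ n : ℕ, 0 ≤
        ‖(if qSeq n ≤ y then (2⁻¹ : ℝ) ^ n else 0) - (if qSeq n ≤ x then (2⁻¹ : ℝ) ^ n else 0)‖ :=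
      fun n => norm_nonneg _
    have h2 : ∀ n : ℕ,
        ‖(if qSeq n ≤ y then (2⁻¹ : ℝ) ^ n else 0) - (if qSeq n ≤ x then (2⁻¹ : ℝ) ^ n else 0)‖
          ≤ (2⁻¹ : ℝ) ^ n := by
      intro n
      rw [Real.norm_eq_abs, abs_sub_le_iff]
      constructor <;>
      · have : (0:ℝ) ≤ (2⁻¹:ℝ)^n := by positivity
        split <;> split <;> linarith
    exact Summable.of_nonneg_of_le h1 h2
      (summable_geometric_of_lt_one (by norm_num) (by norm_num))
  have key : dist (FF y) (FF x) ≤ ∑' n : ℕ,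
      ‖(if qSeq n ≤ y then (2⁻¹ : ℝ) ^ n else 0) - (if qSeq n ≤ x then (2⁻¹ : ℝ) ^ n else 0)‖ := by
    rw [dist_eq_norm, FF, FF, ← Summable.tsum_sub (FF_summable y) (FF_summable x)]
    exact norm_tsum_le_tsum_norm hnormsum
  have tail : ∑' n : ℕ,
      ‖(if qSeq n ≤ y then (2⁻¹ : ℝ) ^ n else 0) - (if qSeq n ≤ x then (2⁻¹ : ℝ) ^ n else 0)‖
      ≤ 2 * (2⁻¹ : ℝ) ^ N := by
    have := Summable.sum_add_tsum_nat_add (f := fun n : ℕ =>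
      ‖(if qSeq n ≤ y then (2⁻¹ : ℝ) ^ n else 0) - (if qSeq n ≤ x then (2⁻¹ : ℝ) ^ n else 0)‖)
      N hnormsum
    rw [← this]
    have hz : ∑ i ∈ Finset.range N,
        ‖(if qSeq i ≤ y then (2⁻¹ : ℝ) ^ i else 0) - (if qSeq i ≤ x then (2⁻¹ : ℝ) ^ i else 0)‖ = 0 := by
      apply Finset.sum_eq_zero
      intro i hi
      rw [hagree i (Finset.mem_range.mp hi), sub_self, norm_zero]
    rw [hz, zero_add]
    have h2 : ∑' n : ℕ,
        ‖(if qSeq (n + N) ≤ y then (2⁻¹ : ℝ) ^ (n + N) else 0)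
          - (if qSeq (n + N) ≤ x then (2⁻¹ : ℝ) ^ (n + N) else 0)‖
        ≤ ∑' n : ℕ, (2⁻¹ : ℝ) ^ (n + N) := by
      have hg : Summable (fun n : ℕ => (2⁻¹ : ℝ) ^ (n + N)) :=
        (summable_geometric_of_lt_one (by norm_num) (by norm_num)).comp_injective
          (add_left_injective N)
      have hb : ∀ n : ℕ,
          ‖(if qSeq (n + N) ≤ y then (2⁻¹ : ℝ) ^ (n + N) else 0)
            - (if qSeq (n + N) ≤ x then (2⁻¹ : ℝ) ^ (n + N) else 0)‖ ≤ (2⁻¹ : ℝ) ^ (n + N) := by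
        intro n
        rw [Real.norm_eq_abs, abs_sub_le_iff]
        constructor <;>
        · have : (0:ℝ) ≤ (2⁻¹:ℝ)^(n+N) := by positivity
          split <;> split <;> linarith
      exact Summable.tsum_le_tsum hb (hnormsum.comp_injective (add_left_injective N)) hg
    refine h2.trans ?_
    have : ∑' n : ℕ, (2⁻¹ : ℝ) ^ (n + N) = (2⁻¹ : ℝ) ^ N * ∑' n : ℕ, (2⁻¹ : ℝ) ^ n := by
      rw [← tsum_mul_left]
      congr 1; funext n; rw [pow_add]; ring
    rw [this, tsum_geometric_of_lt_one (by norm_num) (by norm_num)]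
    norm_num; linarith
  calc dist (FF y) (FF x) ≤ 2 * (2⁻¹ : ℝ) ^ N := key.trans tail
    _ < ε := by linarith

/-- The set of irrational numbers in the unit interval `[0,1]`. -/
def IrrP : Set ℝ := {x | x ∈ Set.Icc (0 : ℝ) 1 ∧ Irrational x}

/-- If there is a Lusin set of cardinality `𝔠` in the irrationals of `[0,1]`, then
`C_8(𝔠, ℵ₁)` holds: there are a set `E ⊆ ℝ` of cardinality `𝔠` and a continuous function
`f : E → ℝ` which is not uniformly continuous on any uncountable subset of `E`. -/
theorem stmt_18
    (hLusin : ∃ T : Set IrrP, #T = continuum ∧ aleph 0 < #T ∧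
      ∀ D : Set IrrP, IsClosed D → interior D = ∅ → (T ∩ D).Countable) :
    ∃ (E : Set ℝ) (f : E → ℝ), #E = continuum ∧ Continuous f ∧
      ∀ A : Set E, aleph 0 < #A → ¬ UniformContinuousOn f A := by
  obtain ⟨T, hT1, hT2, hT3⟩ := hLusin
  set E : Set ℝ := Subtype.val '' T with hEdef
  have hEsub : E ⊆ IrrP := by rintro x ⟨p, _, rfl⟩; exact p.2
  refine ⟨E, E.restrict FF, ?_, ?_, ?_⟩
  · rw [Cardinal.mk_image_eq Subtype.val_injective, hT1]
  · apply ContinuousOn.restrict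
    intro x hx
    exact (FF_contAt (hEsub hx).2).continuousWithinAt
  · intro A hA hUC
    rw [Metric.uniformContinuousOn_iff] at hUC
    set A' : Set ↥IrrP := {p : ↥IrrP | (p : ℝ) ∈ Subtype.val '' A} with hA'def
    have hAA' : aleph 0 < #A' := by
      refine lt_of_lt_of_le hA (Cardinal.mk_le_of_injective
        (f := fun a : ↥A => (⟨⟨((a : ↥E) : ℝ), hEsub (a : ↥E).2⟩,
          ⟨(a : ↥E), a.2, rfl⟩⟩ : ↥A')) ?_)
      intro a b hab
      have : ((a : ↥E) : ℝ) = ((b : ↥E) : ℝ) := congrArg (fun w => ((w : ↥A').1 : ℝ)) hab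
      exact Subtype.ext (Subtype.ext this)
    have hA'T : A' ⊆ T := by
      rintro p hp
      obtain ⟨b, hbA, hb⟩ := hp
      obtain ⟨t, htT, ht⟩ := b.2
      have : t = p := Subtype.ext (by rw [ht, hb])
      rwa [← this]
    have hint : (interior (closure A')).Nonempty := by
      by_contra h
      rw [Set.not_nonempty_iff_eq_empty] at h
      have hc := hT3 (closure A') isClosed_closure h
      have hcc : A'.Countable := hc.mono (Set.subset_inter hA'T subset_closure)
      have hle := Cardinal.le_aleph0_iff_set_countable.mpr hcc
      rw [Cardinal.aleph_zero] at hAA'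
      exact hAA'.not_ge hle
    obtain ⟨p, hp⟩ := hint
    have hmem : interior (closure A') ∈ nhds p := isOpen_interior.mem_nhds hp
    rw [mem_nhds_subtype] at hmem
    obtain ⟨u, hu, husub⟩ := hmem
    rw [Metric.mem_nhds_iff] at hu
    obtain ⟨r1, hr1, hball⟩ := hu
    have hp0 : (0:ℝ) < (p:ℝ) :=
      lt_of_le_of_ne p.2.1.1 fun h => p.2.2 ⟨0, by rw [← h]; norm_num⟩
    have hp1 : (p:ℝ) < 1 :=
      lt_of_le_of_ne p.2.1.2 fun h => p.2.2 ⟨1, by rw [h]; norm_num⟩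
    set r := min r1 (min (p:ℝ) (1 - (p:ℝ))) with hrdef
    have hr : 0 < r := lt_min hr1 (lt_min hp0 (by linarith))
    have hball2 : Metric.ball (p:ℝ) r ⊆ u :=
      fun z hz => hball (Metric.ball_subset_ball (min_le_left _ _) hz)
    have hball01 : Metric.ball (p:ℝ) r ⊆ Set.Icc 0 1 := by
      intro z hz
      rw [Metric.mem_ball, Real.dist_eq] at hz
      have h1 : r ≤ (p:ℝ) := (min_le_right _ _).trans (min_le_left _ _)
      have h2 : r ≤ 1 - (p:ℝ) := (min_le_right _ _).trans (min_le_right _ _)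
      rcases abs_lt.mp hz with ⟨ha, hb⟩
      constructor <;> linarith
    obtain ⟨q, hq1, hq2⟩ := exists_rat_btwn (show (p:ℝ) - r/2 < (p:ℝ) by linarith)
    obtain ⟨n, hn⟩ := qSeq_surj q
    have hq1' : (p:ℝ) - r/2 < qSeq n := by rw [hn]; exact hq1
    have hq2' : qSeq n < (p:ℝ) := by rw [hn]; exact hq2
    obtain ⟨δ, hδ0, hδ⟩ := hUC ((2⁻¹:ℝ)^n) (by positivity)
    set s := min (δ/2) (r/4) with hsdef
    have hs0 : 0 < s := lt_min (by linarith) (by linarith)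
    have hsr : s ≤ r/4 := min_le_right _ _
    have hsd : s ≤ δ/2 := min_le_left _ _
    have hfind : ∀ a b : ℝ, a < b → (∀ z, a < z → z < b → |z - (p:ℝ)| < r) →
        ∃ w : ↥IrrP, w ∈ A' ∧ a < (w:ℝ) ∧ (w:ℝ) < b := by
      intro a b hab hin
      obtain ⟨z, hzirr, hza, hzb⟩ := exists_irrational_btwn hab
      have hzball : z ∈ Metric.ball (p:ℝ) r := by
        rw [Metric.mem_ball, Real.dist_eq]; exact hin z hza hzb
      have hz01 : z ∈ Set.Icc (0:ℝ) 1 := hball01 hzball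
      have hpzcl : (⟨z, hz01, hzirr⟩ : ↥IrrP) ∈ closure A' :=
        interior_subset (husub (hball2 hzball))
      rw [Metric.mem_closure_iff] at hpzcl
      obtain ⟨w, hwA', hw⟩ := hpzcl (min (z - a) (b - z)) (lt_min (by linarith) (by linarith))
      rw [Subtype.dist_eq, Real.dist_eq] at hw
      rcases abs_lt.mp hw with ⟨h1, h2⟩
      have hma := min_le_left (z - a) (b - z)
      have hmb := min_le_right (z - a) (b - z)
      refine ⟨w, hwA', ?_, ?_⟩ <;> linarith
    obtain ⟨wa, hwaA', hwa1, hwa2⟩ := hfind (qSeq n - s) (qSeq n) (by linarith)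
      (fun z h1 h2 => by rw [abs_lt]; constructor <;> linarith)
    obtain ⟨wb, hwbA', hwb1, hwb2⟩ := hfind (qSeq n) (qSeq n + s) (by linarith)
      (fun z h1 h2 => by rw [abs_lt]; constructor <;> linarith)
    obtain ⟨xa, hxaA, hxa⟩ := hwaA'
    obtain ⟨xb, hxbA, hxb⟩ := hwbA'
    have hdist : dist xa xb < δ := by
      rw [Subtype.dist_eq, Real.dist_eq, hxa, hxb, abs_lt]
      constructor <;> linarith
    have hcontr := hδ xa hxaA xb hxbA hdist
    change dist (FF (xa : ℝ)) (FF (xb : ℝ)) < _ at hcontr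
    rw [Real.dist_eq, hxa, hxb] at hcontr
    have hjump := FF_jump n hwa2 (le_of_lt hwb1)
    have habs : (2⁻¹:ℝ)^n ≤ |FF (wa:ℝ) - FF (wb:ℝ)| := by
      rw [abs_sub_comm]
      exact le_trans (by linarith) (le_abs_self _)
    linarith
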